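/- The symmetric groups operad 𝒮 has no proper sub group operad: its only sub group operads are the trivial group operad 𝒥 and 𝒮 itself. -/

import Mathlib

/-- Distributing a sigma type over a sum index. -/
def sumSigmaDistrib {α β : Type*} (P : α ⊕ β → Type*) :
    (Σ s, P s) ≃ (Σ a, P (Sum.inl a)) ⊕ (Σ b, P (Sum.inr b)) where
  toFun p :=
    match p with
    | ⟨Sum.inl a, x⟩ => Sum.inl ⟨a, x⟩
    | ⟨Sum.inr b, x⟩ => Sum.inr ⟨b, x⟩
  invFun q :=
    match q with
    | Sum.inl ⟨a, x⟩ => ⟨Sum.inl a, x⟩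
    | Sum.inr ⟨b, x⟩ => ⟨Sum.inr b, x⟩
  left_inv p := by rcases p with ⟨a | b, x⟩ <;> rfl
  right_inv q := by rcases q with ⟨a, x⟩ | ⟨b, x⟩ <;> rfl

/-- A sigma type over `Fin 1` is just its unique fiber. -/
def sigmaFin1 (Q : Fin 1 → Type*) : (Σ b : Fin 1, Q b) ≃ Q 0 where
  toFun p := Fin.cases (motive := fun b => Q b → Q 0) id (fun i => i.elim0) p.1 p.2
  invFun x := ⟨0, x⟩
  left_inv := by rintro ⟨b, x⟩; fin_cases b; rfl
  right_inv x := rfl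

/-- The order-preserving equivalence `(Σ i : Fin k, Fin (m i)) ≃ Fin (∑ i, m i)`. -/
def finSigmaEquiv : ∀ (k : ℕ) (m : Fin k → ℕ), (Σ i : Fin k, Fin (m i)) ≃ Fin (∑ i, m i)
  | 0, m => (Equiv.equivOfIsEmpty _ (Fin 0)).trans (finCongr (by simp))
  | k+1, m =>
      ((Equiv.sigmaCongrLeft (β := fun i => Fin (m i)) (finSumFinEquiv (m := k) (n := 1))).symm.trans
        ((sumSigmaDistrib _).trans
          ((Equiv.sumCongr (finSigmaEquiv k fun a => m (finSumFinEquiv (Sum.inl a)))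
              (sigmaFin1 _)).trans
            (finSumFinEquiv.trans (finCongr (by
              rw [Fin.sum_univ_castSucc]
              congr 1))))))

/-- Block composition of permutations: `k` blocks of sizes `m 0, …, m (k-1)` are permuted
according to `σ` and the `i`-th block is permuted internally by `τ i`.  This is the operadic
composition of the symmetric groups operad `𝒮`. -/
def blockComp {k : ℕ} {m : Fin k → ℕ} (σ : Equiv.Perm (Fin k))
    (τ : (i : Fin k) → Equiv.Perm (Fin (m i))) : Equiv.Perm (Fin (∑ i, m i)) :=
  let e₂ : (Σ i : Fin k, Fin (m i)) ≃ Σ j : Fin k, Fin (m (σ.symm j)) :=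
    Equiv.sigmaCongr σ fun i => (τ i).trans (finCongr (congrArg m (σ.symm_apply_apply i).symm))
  ((finSigmaEquiv k m).symm.trans e₂).trans
    ((finSigmaEquiv k fun j => m (σ.symm j)).trans (finCongr (Equiv.sum_comp σ.symm m)))

/-- A group operad: an operad `𝒢 = {G n}` of groups together with a morphism `π` to the
symmetric groups operad, such that the identity of `G 1` is the operadic unit and the
operadic composition `γ` is a crossed homomorphism. -/
structure GroupOperad (G : ℕ → Type) [∀ n, Group (G n)] where
  π : ∀ n, G n →* Equiv.Perm (Fin n)
  γ : ∀ {k : ℕ} {m : Fin k → ℕ}, G k → ((i : Fin k) → G (m i)) → G (∑ i, m i)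
  one_γ : ∀ {n : ℕ} (b : G n), γ (1 : G 1) (fun _ : Fin 1 => b) = cast (congrArg G (by simp)) b
  γ_one : ∀ {k : ℕ} (a : G k), γ a (fun _ : Fin k => (1 : G 1)) = cast (congrArg G (by simp)) a
  crossed : ∀ {k : ℕ} {m : Fin k → ℕ} (a a' : G k) (b b' : (i : Fin k) → G (m i)),
      γ (a * a') (fun i => b i * b' i) =
        γ a b *
          cast (congrArg G (Equiv.sum_comp (π k a).symm m))
            (γ a' fun i => b' ((π k a).symm i))
  π_γ : ∀ {k : ℕ} {m : Fin k → ℕ} (a : G k) (b : (i : Fin k) → G (m i)),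
      π (∑ i, m i) (γ a b) = blockComp (π k a) fun i => π (m i) (b i)

/-- A sub group operad of the symmetric groups operad `𝒮`: a sequence of subgroups
`H n ≤ S n` closed under the operadic (block) composition. -/
structure PermSubOperad where
  H : ∀ n, Subgroup (Equiv.Perm (Fin n))
  γ_mem : ∀ {k : ℕ} {m : Fin k → ℕ} (σ : Equiv.Perm (Fin k))
      (τ : (i : Fin k) → Equiv.Perm (Fin (m i))),
      σ ∈ H k → (∀ i, τ i ∈ H (m i)) → blockComp σ τ ∈ H (∑ i, m i)


lemma val_cast_fin {α : Sort*} (f : α → ℕ) {a b : α} (h : a = b) (x : Fin (f a)) :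
    (cast (congrArg (fun i => Fin (f i)) h) x).val = x.val := by subst h; rfl

lemma finSigmaEquiv_val : ∀ (k : ℕ) (m : Fin k → ℕ) (i : Fin k) (x : Fin (m i)),
    ((finSigmaEquiv k m ⟨i, x⟩ : Fin (∑ i, m i)) : ℕ)
      = (∑ j ∈ Finset.Iio i, m j) + (x : ℕ)
  | 0, m, i, x => i.elim0
  | k+1, m, i, x => by
    induction i using Fin.lastCases with
    | last =>
      have h1 : Fin.last k = finSumFinEquiv (Sum.inr (0 : Fin 1)) := by
        apply Fin.ext; simp
      simp only [finSigmaEquiv, Equiv.trans_apply]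
      rw [show ((Equiv.sigmaCongrLeft (β := fun i => Fin (m i))
            (finSumFinEquiv (m := k) (n := 1))).symm ⟨Fin.last k, x⟩)
          = ⟨Sum.inr 0, cast (congrArg (fun i => Fin (m i)) h1) x⟩ from
        (Equiv.symm_apply_eq _).2 (by
          rw [Equiv.sigmaCongrLeft_apply]
          exact Sigma.ext h1 (HEq.symm (cast_heq (congrArg (fun j => Fin (m j)) h1) x)))]
      simp only [sumSigmaDistrib, Equiv.coe_fn_mk,
        Equiv.sumCongr_apply, Sum.map_inr]
      rw [finCongr_apply, Fin.val_cast, show ∀ {a b : ℕ} (y : Fin b),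
        ((finSumFinEquiv (m := a) (Sum.inr y)) : ℕ) = a + y from fun y => by simp,
        show ∀ (Q : Fin 1 → Type) (y : Q 0), sigmaFin1 Q ⟨0, y⟩ = y from fun _ _ => rfl]
      rw [Fin.Iio_last_eq_map, Finset.sum_map, val_cast_fin (fun i => m i) h1 x]
      simp only [Fin.castSuccEmb]
      exact congrArg (· + (x:ℕ)) (Finset.sum_congr rfl fun j _ => rfl)
    | cast i =>
      have h1 : Fin.castSucc i = finSumFinEquiv (Sum.inl i) := by
        apply Fin.ext; simp
      simp only [finSigmaEquiv, Equiv.trans_apply]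
      rw [show ((Equiv.sigmaCongrLeft (β := fun i => Fin (m i))
            (finSumFinEquiv (m := k) (n := 1))).symm ⟨Fin.castSucc i, x⟩)
          = ⟨Sum.inl i, cast (congrArg (fun i => Fin (m i)) h1) x⟩ from
        (Equiv.symm_apply_eq _).2 (by
          rw [Equiv.sigmaCongrLeft_apply]
          exact Sigma.ext h1 (HEq.symm (cast_heq (congrArg (fun j => Fin (m j)) h1) x)))]
      simp only [sumSigmaDistrib, Equiv.coe_fn_mk,
        Equiv.sumCongr_apply, Sum.map_inl]
      rw [finCongr_apply, Fin.val_cast, show ∀ {a b : ℕ} (y : Fin a),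
        ((finSumFinEquiv (n := b) (Sum.inl y)) : ℕ) = y from fun y => by simp]
      rw [finSigmaEquiv_val k _ i _, Fin.Iio_castSucc, Finset.sum_map,
        val_cast_fin (fun i => m i) h1 x]
      congr 1

lemma blockComp_val {k : ℕ} {m : Fin k → ℕ} (σ : Equiv.Perm (Fin k))
    (τ : (i : Fin k) → Equiv.Perm (Fin (m i))) (i : Fin k) (x : Fin (m i)) :
    ((blockComp σ τ (finSigmaEquiv k m ⟨i, x⟩)) : ℕ)
      = (∑ j ∈ Finset.Iio (σ i), m (σ.symm j)) + ((τ i x : Fin (m i)) : ℕ) := by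
  simp only [blockComp, Equiv.trans_apply, Equiv.symm_apply_apply, Equiv.sigmaCongr,
    Equiv.sigmaCongrRight_apply, Equiv.sigmaCongrLeft_apply, finCongr_apply, Fin.coe_cast]
  rw [finSigmaEquiv_val]
  simp

lemma mem_transport (S : PermSubOperad) {a b : ℕ} (h : a = b) {ρ : Equiv.Perm (Fin a)}
    (hρ : ρ ∈ S.H a) : (finCongr h).permCongr ρ ∈ S.H b := by
  subst h
  simpa [finCongr_refl, Equiv.permCongr_eq_mul, Equiv.Perm.refl_mul, Equiv.Perm.mul_refl, Equiv.Perm.refl_inv] using hρ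

lemma step1 (S : PermSubOperad) {n : ℕ} {σ : Equiv.Perm (Fin n)} (hσ : σ ∈ S.H n)
    (hne : σ ≠ 1) : Equiv.swap (0 : Fin 2) 1 ∈ S.H 2 := by
  classical
  have hsupp : σ.support.Nonempty := by
    rw [Finset.nonempty_iff_ne_empty, Ne, Equiv.Perm.support_eq_empty_iff]
    exact hne
  set b := σ.support.max' hsupp with hbdef
  have hb : σ b ≠ b := Equiv.Perm.mem_support.mp (σ.support.max'_mem hsupp)
  set a := σ.symm b with hadef
  have ha : σ a = b := σ.apply_symm_apply b
  have hab : a ≠ b := fun h => hb (h ▸ ha)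
  have hamem : a ∈ σ.support := Equiv.Perm.mem_support.mpr (by rw [ha]; exact Ne.symm hab)
  have hsbmem : σ b ∈ σ.support := by
    rw [Equiv.Perm.mem_support]
    intro h
    exact hb (σ.injective (by rw [h]))
  have haval : a.val < b.val := lt_of_le_of_ne (σ.support.le_max' a hamem) (by
    intro h; exact hab (Fin.ext h))
  have hsbval : (σ b).val < b.val := lt_of_le_of_ne (σ.support.le_max' _ hsbmem) (by
    intro h; exact hb (Fin.ext h))
  set m : Fin n → ℕ := fun j => if j = a ∨ j = b then 1 else 0 with hmdef
  have hma : m a = 1 := by simp [hmdef]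
  set τ : (i : Fin n) → Equiv.Perm (Fin (m i)) := fun i => 1 with hτdef
  have key : blockComp σ τ ∈ S.H (∑ j, m j) :=
    S.γ_mem σ τ hσ fun i => one_mem _
  have hM : (∑ j, m j) = 2 := by
    rw [hmdef]
    rw [Finset.sum_boole]
    have : Finset.univ.filter (fun j => j = a ∨ j = b) = {a, b} := by
      ext j; simp [or_comm]
    rw [this, Finset.card_insert_of_notMem (by simp [hab]), Finset.card_singleton]
    norm_num
  -- the special point
  set x0 : Fin (m a) := ⟨0, by rw [hma]; norm_num⟩ with hx0def
  set p : Fin (∑ j, m j) := finSigmaEquiv n m ⟨a, x0⟩ with hpdef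
  have hpval : (p : ℕ) = 0 := by
    rw [hpdef, finSigmaEquiv_val]
    have : ∑ j ∈ Finset.Iio a, m j = 0 := Finset.sum_eq_zero (by
      intro j hj
      rw [Finset.mem_Iio] at hj
      rw [hmdef]
      simp only [ite_eq_right_iff]
      rintro (rfl | rfl)
      · exact absurd rfl (ne_of_lt hj)
      · exact absurd (hj.trans (Fin.lt_def.mpr haval)) (lt_irrefl b))
    simp [this, hx0def]
  have himval : ((blockComp σ τ p : Fin (∑ j, m j)) : ℕ) = 1 := by
    rw [hpdef, blockComp_val]
    have hτ1 : ((τ a x0 : Fin (m a)) : ℕ) = 0 := by simp [hτdef, hx0def]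
    rw [hτ1, ha, add_zero]
    have : ∀ j : Fin n, (σ.symm j = a ∨ σ.symm j = b) ↔ (j = b ∨ j = σ b) := by
      intro j
      constructor
      · rintro (h | h)
        · left; rw [← ha, ← h, σ.apply_symm_apply]
        · right; rw [← h, σ.apply_symm_apply]
      · rintro (rfl | rfl)
        · left; exact hadef.symm ▸ rfl
        · right; exact σ.symm_apply_apply b
    calc ∑ j ∈ Finset.Iio b, m (σ.symm j)
        = ∑ j ∈ Finset.Iio b, if j = b ∨ j = σ b then 1 else 0 := by
          refine Finset.sum_congr rfl fun j _ => ?_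
          rw [hmdef]
          simp only []
          rw [if_congr (this j) rfl rfl]
      _ = ((Finset.Iio b).filter (fun j => j = b ∨ j = σ b)).card := by
          rw [Finset.sum_boole]; norm_num
      _ = 1 := by
          have : (Finset.Iio b).filter (fun j => j = b ∨ j = σ b) = {σ b} := by
            ext j
            simp only [Finset.mem_filter, Finset.mem_Iio, Finset.mem_singleton]
            constructor
            · rintro ⟨hlt, rfl | rfl⟩
              · exact absurd hlt (lt_irrefl _)
              · rfl
            · rintro rfl
              exact ⟨Fin.lt_def.mpr hsbval, Or.inr rfl⟩
          rw [this, Finset.card_singleton]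
  have hne' : blockComp σ τ ≠ 1 := by
    intro h
    rw [h] at himval
    simp only [Equiv.Perm.coe_one, id_eq] at himval
    rw [hpval] at himval
    exact absurd himval (by norm_num)
  -- transport to H 2
  have key2 : (finCongr hM).permCongr (blockComp σ τ) ∈ S.H 2 := mem_transport S hM key
  have hne2 : (finCongr hM).permCongr (blockComp σ τ) ≠ 1 := by
    intro h
    apply hne'
    have := (finCongr hM).permCongr.injective (a₁ := blockComp σ τ) (a₂ := 1)
    apply this
    rw [h]
    ext z
    simp [Equiv.permCongr_apply]
  have : ∀ ρ : Equiv.Perm (Fin 2), ρ = 1 ∨ ρ = Equiv.swap 0 1 := by decide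
  rcases this ((finCongr hM).permCongr (blockComp σ τ)) with h | h
  · exact absurd h hne2
  · rw [← h]; exact key2

lemma step2 (S : PermSubOperad) (hsw : Equiv.swap (0 : Fin 2) 1 ∈ S.H 2) (k : ℕ) (t : Fin k) :
    Equiv.swap t.castSucc t.succ ∈ S.H (k+1) := by
  classical
  set m : Fin k → ℕ := fun i => if i = t then 2 else 1 with hmdef
  have h2 : ∀ i, i = t → (2 : ℕ) = m i := fun i h => by simp [hmdef, h]
  set τ : (i : Fin k) → Equiv.Perm (Fin (m i)) :=
    fun i => if h : i = t then (finCongr (h2 i h)).permCongr (Equiv.swap 0 1) else 1 with hτdef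
  have hτmem : ∀ i, τ i ∈ S.H (m i) := by
    intro i
    by_cases h : i = t
    · rw [hτdef]; simp only []; rw [dif_pos h]; exact mem_transport S (h2 i h) hsw
    · rw [hτdef]; simp only []; rw [dif_neg h]; exact one_mem _
  have key : blockComp 1 τ ∈ S.H (∑ j, m j) := S.γ_mem 1 τ (one_mem _) hτmem
  have hm1 : ∀ j, m j = 1 + (if j = t then 1 else 0) := fun j => by
    rw [hmdef]; by_cases h : j = t <;> simp [h]
  have hM : (∑ j, m j) = k + 1 := by
    simp only [hm1]
    rw [Finset.sum_add_distrib, Finset.sum_const, Finset.card_univ, Fintype.card_fin,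
      Finset.sum_ite_eq' Finset.univ t (fun _ => 1)]
    simp
  have hSi : ∀ i : Fin k, ∑ j ∈ Finset.Iio i, m j = i.val + (if t < i then 1 else 0) := by
    intro i
    simp only [hm1]
    rw [Finset.sum_add_distrib, Finset.sum_const,
      Finset.sum_ite_eq' (Finset.Iio i) t (fun _ => 1)]
    simp [Finset.mem_Iio]
  have hcl : (finCongr hM).permCongr (blockComp 1 τ) = Equiv.swap t.castSucc t.succ := by
    suffices h : ∀ pq : Σ i : Fin k, Fin (m i),
        ((finCongr hM).permCongr (blockComp 1 τ)) (finCongr hM (finSigmaEquiv k m pq))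
          = Equiv.swap t.castSucc t.succ (finCongr hM (finSigmaEquiv k m pq)) by
      apply Equiv.ext; intro y
      have := h ((finSigmaEquiv k m).symm ((finCongr hM).symm y))
      rwa [Equiv.apply_symm_apply, Equiv.apply_symm_apply] at this
    rintro ⟨i, x⟩
    rw [Equiv.permCongr_apply, Equiv.symm_apply_apply]
    apply Fin.ext
    rw [finCongr_apply, Fin.coe_cast]
    have hbv : ((blockComp 1 τ (finSigmaEquiv k m ⟨i, x⟩)) : ℕ)
        = (∑ j ∈ Finset.Iio i, m j) + ((τ i x : Fin (m i)) : ℕ) := by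
      have := blockComp_val (1 : Equiv.Perm (Fin k)) τ i x
      simpa [Equiv.Perm.one_symm] using this
    have hwv : ((finCongr hM (finSigmaEquiv k m ⟨i, x⟩)) : ℕ)
        = (∑ j ∈ Finset.Iio i, m j) + (x : ℕ) := by
      rw [finCongr_apply, Fin.coe_cast, finSigmaEquiv_val]
    by_cases hit : i = t
    · subst hit
      have hmi : m i = 2 := (h2 i rfl).symm
      have hx2 : (x : ℕ) < 2 := by have h := x.2; omega
      have hτv : ((τ i x : Fin (m i)) : ℕ) = 1 - (x : ℕ) := by
        have hτi : τ i = (finCongr (h2 i rfl)).permCongr (Equiv.swap 0 1) := by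
          rw [hτdef]; exact dif_pos rfl
        rw [hτi, Equiv.permCongr_apply, finCongr_apply, Fin.coe_cast]
        rcases (by omega : (x:ℕ) = 0 ∨ (x:ℕ) = 1) with h0 | h1
        · rw [show (finCongr (h2 i rfl)).symm x = (0 : Fin 2) from Fin.ext (by simp [h0])]
          rw [Equiv.swap_apply_left, h0]
          rfl
        · rw [show (finCongr (h2 i rfl)).symm x = (1 : Fin 2) from Fin.ext (by simp [h1])]
          rw [Equiv.swap_apply_right, h1]
          rfl
      rcases (by omega : (x:ℕ) = 0 ∨ (x:ℕ) = 1) with h0 | h1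
      · rw [show (finCongr hM (finSigmaEquiv k m ⟨i, x⟩)) = Fin.castSucc i from
          Fin.ext (by rw [hwv, hSi, h0]; simp)]
        rw [Equiv.swap_apply_left]
        rw [hbv, hSi, hτv, h0, Fin.val_succ]
        simp
      · rw [show (finCongr hM (finSigmaEquiv k m ⟨i, x⟩)) = Fin.succ i from
          Fin.ext (by rw [hwv, hSi, h1, Fin.val_succ]; simp)]
        rw [Equiv.swap_apply_right]
        rw [hbv, hSi, hτv, h1, Fin.coe_castSucc]
        simp
    · have hmi : m i = 1 := by simp [hmdef, hit]
      have hx0 : (x : ℕ) = 0 := by have h := x.2; omega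
      have hτv : ((τ i x : Fin (m i)) : ℕ) = 0 := by
        have hτi : τ i = 1 := by rw [hτdef]; exact dif_neg hit
        rw [hτi]; simpa using hx0
      rw [Equiv.swap_apply_of_ne_of_ne, hbv, hwv, hτv, hx0]
      · rw [Ne, Fin.ext_iff, hwv, hSi, hx0, Fin.coe_castSucc]
        rcases Ne.lt_or_gt hit with h | h
        · rw [if_neg (asymm h)]
          rw [Fin.lt_def] at h
          omega
        · rw [if_pos h]
          rw [Fin.lt_def] at h
          omega
      · rw [Ne, Fin.ext_iff, hwv, hSi, hx0, Fin.val_succ]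
        rcases Ne.lt_or_gt hit with h | h
        · rw [if_neg (asymm h)]
          rw [Fin.lt_def] at h
          omega
        · rw [if_pos h]
          rw [Fin.lt_def] at h
          omega
  rw [← hcl]
  exact mem_transport S hM key

lemma htop (S : PermSubOperad) (hsw : Equiv.swap (0 : Fin 2) 1 ∈ S.H 2) (n : ℕ) :
    S.H n = ⊤ := by
  rw [Subgroup.eq_top_iff']
  intro x
  cases n with
  | zero =>
    have : x = 1 := Equiv.ext fun a => a.elim0
    rw [this]; exact one_mem _
  | succ k =>
    have hx : x ∈ Submonoid.closure
        (Set.range fun i : Fin k => Equiv.swap i.castSucc i.succ) := by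
      rw [Equiv.Perm.mclosure_swap_castSucc_succ]; trivial
    refine Submonoid.closure_induction ?_ ?_ ?_ hx
    · rintro _ ⟨t, rfl⟩
      exact step2 S hsw k t
    · exact one_mem _
    · intro a b _ _ ha hb
      exact mul_mem ha hb

theorem symmetricOperad_no_proper_subOperad (S : PermSubOperad) :
    (∀ n, S.H n = ⊥) ∨ (∀ n, S.H n = ⊤) := by
  by_cases hc : ∀ n, ∀ σ ∈ S.H n, σ = 1
  · left
    intro n
    exact (Subgroup.eq_bot_iff_forall _).2 (hc n)
  · right
    push_neg at hc
    obtain ⟨n, σ, hσ, hne⟩ := hc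
    exact htop S (step1 S hσ hne)
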